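/- Let BQP_{2|𝒯|,n} = conv({(y,q,q̄,v,v̄) ∈ {0,1}^{n+2|𝒯|+2|𝒯|n} : v_T = q_T·y and v̄_T = q̄_T·y for all T ∈ 𝒯}) be the boolean quadric polytope of the complete bipartite graph K_{2|𝒯|,n}. Then {(y,q,q̄,v,v̄) ∈ BQP_{2|𝒯|,n} : for all T ∈ 𝒯, v̄_{T,i} = 0 ∀ i ∈ T, v_{T,j} = 0 ∀ j ∈ δ(T), q_T + q̄_T = 1, v_T + v̄_T = y} = conv(𝒮_𝒯). -/

import Mathlib

/-- The ambient space of points `(y, q, q̄, v, v̄)`. -/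
abbrev Pt (n : ℕ) (𝒯 : Finset (Finset (Fin n))) : Type :=
  (Fin n → ℝ) × ({T // T ∈ 𝒯} → ℝ) × ({T // T ∈ 𝒯} → ℝ) ×
    ({T // T ∈ 𝒯} → Fin n → ℝ) × ({T // T ∈ 𝒯} → Fin n → ℝ)

/-- The bilinear set `𝒮_𝒯`; for `w = (y, q, q̄, v, v̄)` we write `w.1 = y`,
`w.2.1 = q`, `w.2.2.1 = q̄`, `w.2.2.2.1 = v`, `w.2.2.2.2 = v̄`. -/
def STset {n : ℕ} (G : SimpleGraph (Fin n)) (𝒯 : Finset (Finset (Fin n))) :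
    Set (Pt n 𝒯) :=
  {w | (∀ i, 0 ≤ w.1 i ∧ w.1 i ≤ 1) ∧
    ∀ T : {T // T ∈ 𝒯},
      (∀ i ∈ T.1, w.2.2.2.2 T i = 0) ∧
      (∀ j : Fin n, (∃ i ∈ T.1, G.Adj i j) → w.2.2.2.1 T j = 0) ∧
      (∀ j, 0 ≤ w.2.2.2.1 T j ∧ w.2.2.2.1 T j ≤ w.2.1 T) ∧
      (∀ j, 0 ≤ w.2.2.2.2 T j ∧ w.2.2.2.2 T j ≤ w.2.2.1 T) ∧
      (w.2.1 T + w.2.2.1 T = 1) ∧ 0 ≤ w.2.1 T ∧ 0 ≤ w.2.2.1 T ∧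
      (∀ j, w.2.2.2.1 T j = w.2.1 T * w.1 j) ∧
      (∀ j, w.2.2.2.2 T j = w.2.2.1 T * w.1 j)}

/-- The boolean quadric polytope of the complete bipartite graph `K_{2|𝒯|, n}`:
the convex hull of the binary points with `v_T = q_T·y` and `v̄_T = q̄_T·y`. -/
def BQP {n : ℕ} (𝒯 : Finset (Finset (Fin n))) : Set (Pt n 𝒯) :=
  convexHull ℝ
    {w | (∀ i, w.1 i = 0 ∨ w.1 i = 1) ∧
      (∀ T, w.2.1 T = 0 ∨ w.2.1 T = 1) ∧
      (∀ T, w.2.2.1 T = 0 ∨ w.2.2.1 T = 1) ∧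
      (∀ T j, w.2.2.2.1 T j = w.2.1 T * w.1 j) ∧
      (∀ T j, w.2.2.2.2 T j = w.2.2.1 T * w.1 j)}

/- ### Auxiliary lemmas -/

noncomputable def bInd (b : Bool) : ℝ := if b then 1 else 0

@[simp] lemma bInd_true : bInd true = 1 := rfl
@[simp] lemma bInd_false : bInd false = 0 := rfl

lemma sum_prod_bool {α : Type} [Fintype α] [DecidableEq α] (f : α → Bool → ℝ) :
    ∑ σ : α → Bool, ∏ i, f i (σ i) = ∏ i, (f i false + f i true) := by
  rw [← Fintype.prod_sum]
  exact Finset.prod_congr rfl fun i _ => by rw [Fintype.sum_bool]; ring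

lemma exp_one {α : Type} [Fintype α] [DecidableEq α] (f : α → Bool → ℝ)
    (h : ∀ i, f i false + f i true = 1) (j : α) (u : Bool → ℝ) :
    ∑ σ : α → Bool, (∏ i, f i (σ i)) * u (σ j) =
      f j false * u false + f j true * u true := by
  have key : ∀ σ : α → Bool, (∏ i, f i (σ i)) * u (σ j)
      = ∏ i, (f i (σ i) * (if i = j then u (σ i) else 1)) := by
    intro σ
    rw [Finset.prod_mul_distrib]
    congr 1
    simp
  simp_rw [key]
  rw [sum_prod_bool (fun i b => f i b * (if i = j then u b else 1))]
  rw [Finset.prod_eq_single j]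
  · simp
  · intro i _ hij
    simp [hij, h i]
  · simp

section prodexp

variable {α β : Type} [Fintype α] [DecidableEq α] [Fintype β] [DecidableEq β]
  (f : α → Bool → ℝ) (g : β → Bool → ℝ)

lemma exp_zero (hf : ∀ i, f i false + f i true = 1) (hg : ∀ T, g T false + g T true = 1) :
    ∑ p : (α → Bool) × (β → Bool), (∏ i, f i (p.1 i)) * (∏ S, g S (p.2 S)) = 1 := by
  rw [Fintype.sum_prod_type]
  dsimp only
  rw [← Fintype.sum_mul_sum, sum_prod_bool, sum_prod_bool]
  simp [hf, hg]

lemma exp_left (hf : ∀ i, f i false + f i true = 1) (hg : ∀ T, g T false + g T true = 1)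
    (j : α) (u : Bool → ℝ) :
    ∑ p : (α → Bool) × (β → Bool),
        ((∏ i, f i (p.1 i)) * (∏ S, g S (p.2 S))) * u (p.1 j) =
      f j false * u false + f j true * u true := by
  rw [Fintype.sum_prod_type]
  dsimp only
  have h1 : ∀ σ : α → Bool, ∀ τ : β → Bool,
      ((∏ i, f i (σ i)) * (∏ S, g S (τ S))) * u (σ j) =
        ((∏ i, f i (σ i)) * u (σ j)) * (∏ S, g S (τ S)) := by intro σ τ; ring
  simp_rw [h1]
  rw [← Fintype.sum_mul_sum, exp_one f hf j u, sum_prod_bool]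
  simp [hg]

lemma exp_right (hf : ∀ i, f i false + f i true = 1) (hg : ∀ T, g T false + g T true = 1)
    (T : β) (v : Bool → ℝ) :
    ∑ p : (α → Bool) × (β → Bool),
        ((∏ i, f i (p.1 i)) * (∏ S, g S (p.2 S))) * v (p.2 T) =
      g T false * v false + g T true * v true := by
  rw [Fintype.sum_prod_type]
  dsimp only
  have h1 : ∀ σ : α → Bool, ∀ τ : β → Bool,
      ((∏ i, f i (σ i)) * (∏ S, g S (τ S))) * v (τ T) =
        (∏ i, f i (σ i)) * ((∏ S, g S (τ S)) * v (τ T)) := by intro σ τ; ring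
  simp_rw [h1]
  rw [← Fintype.sum_mul_sum, exp_one g hg T v, sum_prod_bool]
  simp [hf]

lemma exp_both (hf : ∀ i, f i false + f i true = 1) (hg : ∀ T, g T false + g T true = 1)
    (j : α) (T : β) (u v : Bool → ℝ) :
    ∑ p : (α → Bool) × (β → Bool),
        ((∏ i, f i (p.1 i)) * (∏ S, g S (p.2 S))) * (u (p.1 j) * v (p.2 T)) =
      (f j false * u false + f j true * u true) *
        (g T false * v false + g T true * v true) := by
  rw [Fintype.sum_prod_type]
  dsimp only
  have h1 : ∀ σ : α → Bool, ∀ τ : β → Bool,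
      ((∏ i, f i (σ i)) * (∏ S, g S (τ S))) * (u (σ j) * v (τ T)) =
        ((∏ i, f i (σ i)) * u (σ j)) * ((∏ S, g S (τ S)) * v (τ T)) := by
    intro σ τ; ring
  simp_rw [h1]
  rw [← Fintype.sum_mul_sum, exp_one f hf j u, exp_one g hg T v]

end prodexp

/-- Coordinates of a finite sum of scaled points of `Pt`. -/
lemma pt_sum_coords {n : ℕ} {𝒯 : Finset (Finset (Fin n))} {ι : Type*}
    (t : Finset ι) (c : ι → ℝ) (z : ι → Pt n 𝒯) :
    (∑ i ∈ t, c i • z i) =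
      (fun j => ∑ i ∈ t, c i * (z i).1 j,
       fun T => ∑ i ∈ t, c i * (z i).2.1 T,
       fun T => ∑ i ∈ t, c i * (z i).2.2.1 T,
       fun T j => ∑ i ∈ t, c i * (z i).2.2.2.1 T j,
       fun T j => ∑ i ∈ t, c i * (z i).2.2.2.2 T j) := by
  refine Prod.ext_iff.mpr ⟨?_, Prod.ext_iff.mpr ⟨?_, Prod.ext_iff.mpr ⟨?_,
    Prod.ext_iff.mpr ⟨?_, ?_⟩⟩⟩⟩ <;>
  · simp only [Prod.fst_sum, Prod.snd_sum, Prod.smul_fst, Prod.smul_snd]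
    funext
    simp [Finset.sum_apply]

/-- Every point of `𝒮_𝒯` lies in the boolean quadric polytope. -/
lemma STset_subset_BQP {n : ℕ} (G : SimpleGraph (Fin n)) (𝒯 : Finset (Finset (Fin n))) :
    STset G 𝒯 ⊆ BQP 𝒯 := by
  intro w hw
  obtain ⟨hy, hT⟩ := hw
  set f : Fin n → Bool → ℝ := fun i b => if b then w.1 i else 1 - w.1 i with hfdef
  set g : {T // T ∈ 𝒯} → Bool → ℝ := fun T b => if b then w.2.1 T else 1 - w.2.1 T with hgdef
  have hf : ∀ i, f i false + f i true = 1 := fun i => by simp [hfdef]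
  have hg : ∀ T, g T false + g T true = 1 := fun T => by simp [hgdef]
  set μ : (Fin n → Bool) × ({T // T ∈ 𝒯} → Bool) → ℝ :=
    fun p => (∏ i, f i (p.1 i)) * (∏ S, g S (p.2 S)) with hμdef
  set P : (Fin n → Bool) × ({T // T ∈ 𝒯} → Bool) → Pt n 𝒯 :=
    fun p => (fun j => bInd (p.1 j), fun T => bInd (p.2 T), fun T => 1 - bInd (p.2 T),
      fun T j => bInd (p.2 T) * bInd (p.1 j),
      fun T j => (1 - bInd (p.2 T)) * bInd (p.1 j)) with hPdef
  have hq0 : ∀ T, 0 ≤ w.2.1 T := fun T => (hT T).2.2.2.2.2.1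
  have hq1 : ∀ T, w.2.1 T ≤ 1 := by
    intro T
    obtain ⟨-,-,-,-,h5,-,h7,-,-⟩ := hT T
    linarith
  have hμ0 : ∀ p, 0 ≤ μ p := by
    intro p
    apply mul_nonneg
    · apply Finset.prod_nonneg
      intro i _
      cases h : p.1 i
      · have := (hy i).2
        simp only [hfdef]
        simp only [Bool.false_eq_true, if_false]
        linarith
      · simpa [hfdef] using (hy i).1
    · apply Finset.prod_nonneg
      intro S _
      cases h : p.2 S
      · have := hq1 S
        simp only [hgdef]
        simp only [Bool.false_eq_true, if_false]
        linarith
      · simpa [hgdef] using hq0 S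
  have hμsum : ∑ p, μ p = 1 := exp_zero f g hf hg
  have hPmem : ∀ p, P p ∈
      {w : Pt n 𝒯 | (∀ i, w.1 i = 0 ∨ w.1 i = 1) ∧
        (∀ T, w.2.1 T = 0 ∨ w.2.1 T = 1) ∧
        (∀ T, w.2.2.1 T = 0 ∨ w.2.2.1 T = 1) ∧
        (∀ T j, w.2.2.2.1 T j = w.2.1 T * w.1 j) ∧
        (∀ T j, w.2.2.2.2 T j = w.2.2.1 T * w.1 j)} := by
    intro p
    refine ⟨fun i => ?_, fun T => ?_, fun T => ?_, fun T j => rfl, fun T j => rfl⟩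
    · cases h : p.1 i <;> simp [hPdef, h, bInd]
    · cases h : p.2 T <;> simp [hPdef, h, bInd]
    · cases h : p.2 T <;> simp [hPdef, h, bInd]
  have hsum : ∑ p, μ p • P p = w := by
    rw [pt_sum_coords]
    have e1 : ∀ j, ∑ p, μ p * (P p).1 j = w.1 j := by
      intro j
      have := exp_left f g hf hg j bInd
      simp only [hμdef, hPdef]
      rw [this]
      simp [hfdef]
    have e2 : ∀ T, ∑ p, μ p * (P p).2.1 T = w.2.1 T := by
      intro T
      have := exp_right f g hf hg T bInd
      simp only [hμdef, hPdef]
      rw [this]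
      simp [hgdef]
    have e3 : ∀ T, ∑ p, μ p * (P p).2.2.1 T = w.2.2.1 T := by
      intro T
      have := exp_right f g hf hg T (fun b => 1 - bInd b)
      simp only [hμdef, hPdef]
      rw [this]
      obtain ⟨-,-,-,-,h5,-,-,-,-⟩ := hT T
      simp only [hgdef, bInd_true, bInd_false]
      norm_num
      linarith
    have e4 : ∀ T j, ∑ p, μ p * (P p).2.2.2.1 T j = w.2.2.2.1 T j := by
      intro T j
      have := exp_both f g hf hg j T bInd bInd
      simp only [hμdef, hPdef]
      have comm : ∀ p : (Fin n → Bool) × ({T // T ∈ 𝒯} → Bool),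
          ((∏ i, f i (p.1 i)) * ∏ S, g S (p.2 S)) * (bInd (p.2 T) * bInd (p.1 j)) =
          ((∏ i, f i (p.1 i)) * ∏ S, g S (p.2 S)) * (bInd (p.1 j) * bInd (p.2 T)) := by
        intro p; ring
      simp_rw [comm]
      rw [this]
      obtain ⟨-,-,-,-,-,-,-,h8,-⟩ := hT T
      simp only [hfdef, hgdef, bInd_true, bInd_false, h8 j]
      norm_num
      ring
    have e5 : ∀ T j, ∑ p, μ p * (P p).2.2.2.2 T j = w.2.2.2.2 T j := by
      intro T j
      have := exp_both f g hf hg j T bInd (fun b => 1 - bInd b)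
      simp only [hμdef, hPdef]
      have comm : ∀ p : (Fin n → Bool) × ({T // T ∈ 𝒯} → Bool),
          ((∏ i, f i (p.1 i)) * ∏ S, g S (p.2 S)) * ((1 - bInd (p.2 T)) * bInd (p.1 j)) =
          ((∏ i, f i (p.1 i)) * ∏ S, g S (p.2 S)) * (bInd (p.1 j) * (1 - bInd (p.2 T))) := by
        intro p; ring
      simp_rw [comm]
      rw [this]
      obtain ⟨-,-,-,-,h5,-,-,-,h9⟩ := hT T
      simp only [hfdef, hgdef, bInd_true, bInd_false, h9 j]
      norm_num
      linear_combination (-(w.1 j)) * h5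
    refine Prod.ext_iff.mpr ⟨funext e1, Prod.ext_iff.mpr ⟨funext e2, Prod.ext_iff.mpr
      ⟨funext e3, Prod.ext_iff.mpr ⟨funext fun T => funext (e4 T),
        funext fun T => funext (e5 T)⟩⟩⟩⟩
  rw [← hsum]
  exact (convex_convexHull ℝ _).sum_mem (fun p _ => hμ0 p) hμsum
    (fun p _ => subset_convexHull ℝ _ (hPmem p))

/-- Theorem 4: intersecting `BQP_{2|𝒯|,n}` with the constraints
`v̄_{T,i} = 0 (i ∈ T)`, `v_{T,j} = 0 (j ∈ δ(T))`, `q_T + q̄_T = 1`, and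
`v_T + v̄_T = y` yields exactly `conv(𝒮_𝒯)`. -/
theorem stmt_11 {n : ℕ} (G : SimpleGraph (Fin n)) (𝒯 : Finset (Finset (Fin n)))
    (hdisj : ∀ T₁ ∈ 𝒯, ∀ T₂ ∈ 𝒯, T₁ ≠ T₂ → ∀ i, i ∈ T₁ → i ∉ T₂)
    (hcover : ∀ i j : Fin n, G.Adj i j → (∃ T ∈ 𝒯, i ∈ T) ∨ (∃ T ∈ 𝒯, j ∈ T))
    (hfeas : ∀ T ∈ 𝒯, ∀ i ∈ T, ∀ j : Fin n, G.Adj i j ↔ ∃ i' ∈ T, G.Adj i' j) :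
    {w ∈ BQP 𝒯 |
      ∀ T : {T // T ∈ 𝒯},
        (∀ i ∈ T.1, w.2.2.2.2 T i = 0) ∧
        (∀ j : Fin n, (∃ i ∈ T.1, G.Adj i j) → w.2.2.2.1 T j = 0) ∧
        (w.2.1 T + w.2.2.1 T = 1) ∧
        (∀ j, w.2.2.2.1 T j + w.2.2.2.2 T j = w.1 j)}
      = convexHull ℝ (STset G 𝒯) := by
  apply Set.Subset.antisymm
  · -- hard direction: a point of BQP satisfying the constraints is in conv(𝒮_𝒯)
    rintro x ⟨hxB, hxC⟩
    rw [BQP, convexHull_eq] at hxB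
    obtain ⟨ι, t, wt, z, hw0, hw1, hz, hx⟩ := hxB
    rw [Finset.centerMass_eq_of_sum_1 _ _ hw1] at hx
    set t' := t.filter (fun i => wt i ≠ 0) with ht'
    have hsub : t' ⊆ t := Finset.filter_subset _ _
    have hw1' : ∑ i ∈ t', wt i = 1 := by
      rw [ht', Finset.sum_filter_ne_zero]; exact hw1
    have hwpos : ∀ i ∈ t', 0 < wt i := by
      intro i hi
      rw [ht', Finset.mem_filter] at hi
      exact lt_of_le_of_ne (hw0 i hi.1) (Ne.symm hi.2)
    have hx' : ∑ i ∈ t', wt i • z i = x := by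
      rw [← hx, ht']
      apply Finset.sum_filter_of_ne
      intro i _ hne h0
      apply hne; rw [h0, zero_smul]
    rw [pt_sum_coords] at hx'
    have hxy : ∀ j, ∑ i ∈ t', wt i * (z i).1 j = x.1 j :=
      fun j => congrFun (congrArg Prod.fst hx') j
    have hxq : ∀ T, ∑ i ∈ t', wt i * (z i).2.1 T = x.2.1 T :=
      fun T => congrFun (congrArg (fun a : Pt n 𝒯 => a.2.1) hx') T
    have hxv : ∀ T j, ∑ i ∈ t', wt i * (z i).2.2.2.1 T j = x.2.2.2.1 T j :=
      fun T j => congrFun (congrFun (congrArg (fun a : Pt n 𝒯 => a.2.2.2.1) hx') T) j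
    -- binary facts
    have hby : ∀ i ∈ t', ∀ j, (z i).1 j = 0 ∨ (z i).1 j = 1 := fun i hi => (hz i (hsub hi)).1
    have hbq : ∀ i ∈ t', ∀ T, (z i).2.1 T = 0 ∨ (z i).2.1 T = 1 :=
      fun i hi => (hz i (hsub hi)).2.1
    have hbv : ∀ i ∈ t', ∀ T j, (z i).2.2.2.1 T j = (z i).2.1 T * (z i).1 j :=
      fun i hi => (hz i (hsub hi)).2.2.2.1
    -- sums of the modified coordinates
    have hSB : ∀ T j, ∑ i ∈ t', wt i * ((z i).2.1 T * (z i).1 j) = x.2.2.2.1 T j := by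
      intro T j
      rw [← hxv T j]
      exact Finset.sum_congr rfl fun i hi => by rw [hbv i hi T j]
    have hSA : ∀ T j, ∑ i ∈ t', wt i * ((1 - (z i).2.1 T) * (z i).1 j) =
        x.1 j - x.2.2.2.1 T j := by
      intro T j
      have : ∀ i ∈ t', wt i * ((1 - (z i).2.1 T) * (z i).1 j) =
          wt i * (z i).1 j - wt i * ((z i).2.1 T * (z i).1 j) := by
        intro i _; ring
      rw [Finset.sum_congr rfl this, Finset.sum_sub_distrib, hxy, hSB]
    have hSq : ∀ T, ∑ i ∈ t', wt i * (1 - (z i).2.1 T) = 1 - x.2.1 T := by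
      intro T
      have : ∀ i ∈ t', wt i * (1 - (z i).2.1 T) = wt i - wt i * (z i).2.1 T := by
        intro i _; ring
      rw [Finset.sum_congr rfl this, Finset.sum_sub_distrib, hw1', hxq]
    -- term-wise vanishing on the faces
    have hzeroA : ∀ T : {T // T ∈ 𝒯}, ∀ j ∈ T.1, ∀ i ∈ t',
        (1 - (z i).2.1 T) * (z i).1 j = 0 := by
      intro T j hj i hi
      have hsum0 : ∑ i ∈ t', wt i * ((1 - (z i).2.1 T) * (z i).1 j) = 0 := by
        rw [hSA T j]
        have c1 := (hxC T).1 j hj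
        have c4 := (hxC T).2.2.2 j
        linarith
      have hnn : ∀ i ∈ t', 0 ≤ wt i * ((1 - (z i).2.1 T) * (z i).1 j) := by
        intro i hi
        apply mul_nonneg (le_of_lt (hwpos i hi))
        apply mul_nonneg
        · rcases hbq i hi T with h | h <;> rw [h] <;> norm_num
        · rcases hby i hi j with h | h <;> rw [h] <;> norm_num
      have := (Finset.sum_eq_zero_iff_of_nonneg hnn).mp hsum0 i hi
      rcases mul_eq_zero.mp this with h | h
      · exact absurd h (ne_of_gt (hwpos i hi))
      · exact h
    have hzeroB : ∀ T : {T // T ∈ 𝒯}, ∀ j : Fin n, (∃ i' ∈ T.1, G.Adj i' j) → ∀ i ∈ t',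
        (z i).2.1 T * (z i).1 j = 0 := by
      intro T j hj i hi
      have hsum0 : ∑ i ∈ t', wt i * ((z i).2.1 T * (z i).1 j) = 0 := by
        rw [hSB T j]
        exact (hxC T).2.1 j hj
      have hnn : ∀ i ∈ t', 0 ≤ wt i * ((z i).2.1 T * (z i).1 j) := by
        intro i hi
        apply mul_nonneg (le_of_lt (hwpos i hi))
        apply mul_nonneg
        · rcases hbq i hi T with h | h <;> rw [h] <;> norm_num
        · rcases hby i hi j with h | h <;> rw [h] <;> norm_num
      have := (Finset.sum_eq_zero_iff_of_nonneg hnn).mp hsum0 i hi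
      rcases mul_eq_zero.mp this with h | h
      · exact absurd h (ne_of_gt (hwpos i hi))
      · exact h
    -- the modified points
    set z' : ι → Pt n 𝒯 := fun i =>
      ((z i).1, (z i).2.1, fun T => 1 - (z i).2.1 T,
        fun T j => (z i).2.1 T * (z i).1 j,
        fun T j => (1 - (z i).2.1 T) * (z i).1 j) with hz'def
    have hz'mem : ∀ i ∈ t', z' i ∈ STset G 𝒯 := by
      intro i hi
      refine ⟨fun j => ?_, fun T => ⟨fun j hj => ?_, fun j hj => ?_, fun j => ?_, fun j => ?_,
        by simp only [hz'def]; ring, ?_, ?_, fun j => rfl, fun j => rfl⟩⟩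
      · rcases hby i hi j with h | h <;> simp [hz'def, h] <;> norm_num
      · exact hzeroA T j hj i hi
      · exact hzeroB T j hj i hi
      · constructor
        · rcases hbq i hi T with h | h <;> rcases hby i hi j with h' | h' <;>
            simp [hz'def, h, h']
        · rcases hbq i hi T with h | h <;> rcases hby i hi j with h' | h' <;>
            simp [hz'def, h, h'] <;> norm_num
      · constructor
        · rcases hbq i hi T with h | h <;> rcases hby i hi j with h' | h' <;>
            simp [hz'def, h, h'] <;> norm_num
        · rcases hbq i hi T with h | h <;> rcases hby i hi j with h' | h' <;>
            simp [hz'def, h, h'] <;> norm_num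
      · rcases hbq i hi T with h | h <;> simp [hz'def, h]
      · rcases hbq i hi T with h | h <;> simp [hz'def, h] <;> norm_num
    have hxsum : ∑ i ∈ t', wt i • z' i = x := by
      rw [pt_sum_coords]
      have e1 : ∀ j, ∑ i ∈ t', wt i * (z' i).1 j = x.1 j := fun j => hxy j
      have e2 : ∀ T, ∑ i ∈ t', wt i * (z' i).2.1 T = x.2.1 T := fun T => hxq T
      have e3 : ∀ T, ∑ i ∈ t', wt i * (z' i).2.2.1 T = x.2.2.1 T := by
        intro T
        have c3 := (hxC T).2.2.1
        simp only [hz'def]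
        linarith [hSq T]
      have e4 : ∀ T j, ∑ i ∈ t', wt i * (z' i).2.2.2.1 T j = x.2.2.2.1 T j :=
        fun T j => hSB T j
      have e5 : ∀ T j, ∑ i ∈ t', wt i * (z' i).2.2.2.2 T j = x.2.2.2.2 T j := by
        intro T j
        have c4 := (hxC T).2.2.2 j
        calc ∑ i ∈ t', wt i * ((1 - (z i).2.1 T) * (z i).1 j)
            = x.1 j - x.2.2.2.1 T j := hSA T j
        _ = x.2.2.2.2 T j := by linarith
      refine Prod.ext_iff.mpr ⟨funext e1, Prod.ext_iff.mpr ⟨funext e2, Prod.ext_iff.mpr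
        ⟨funext e3, Prod.ext_iff.mpr ⟨funext fun T => funext (e4 T),
          funext fun T => funext (e5 T)⟩⟩⟩⟩
    rw [← hxsum]
    exact (convex_convexHull ℝ _).sum_mem (fun i hi => le_of_lt (hwpos i hi)) hw1'
      (fun i hi => subset_convexHull ℝ _ (hz'mem i hi))
  · -- easy direction
    apply convexHull_min
    · intro w hw
      obtain ⟨hy, hT⟩ := hw
      refine ⟨STset_subset_BQP G 𝒯 ⟨hy, hT⟩, fun T => ?_⟩
      obtain ⟨h1, h2, h3, h4, h5, h6, h7, h8, h9⟩ := hT T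
      refine ⟨h1, h2, h5, fun j => ?_⟩
      rw [h8 j, h9 j, ← add_mul, h5, one_mul]
    · -- convexity of the intersection
      rintro a ⟨haB, haC⟩ b ⟨hbB, hbC⟩ s u hs hu hsu
      refine ⟨(convex_convexHull ℝ _) haB hbB hs hu hsu, fun T => ?_⟩
      obtain ⟨a1, a2, a3, a4⟩ := haC T
      obtain ⟨b1, b2, b3, b4⟩ := hbC T
      refine ⟨fun i hi => ?_, fun j hj => ?_, ?_, fun j => ?_⟩
      · simp only [Prod.fst_add, Prod.snd_add, Prod.smul_fst, Prod.smul_snd, Pi.add_apply,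
          Pi.smul_apply, smul_eq_mul, a1 i hi, b1 i hi]
        ring
      · simp only [Prod.fst_add, Prod.snd_add, Prod.smul_fst, Prod.smul_snd, Pi.add_apply,
          Pi.smul_apply, smul_eq_mul, a2 j hj, b2 j hj]
        ring
      · simp only [Prod.fst_add, Prod.snd_add, Prod.smul_fst, Prod.smul_snd, Pi.add_apply,
          Pi.smul_apply, smul_eq_mul]
        calc s * a.2.1 T + u * b.2.1 T + (s * a.2.2.1 T + u * b.2.2.1 T)
            = s * (a.2.1 T + a.2.2.1 T) + u * (b.2.1 T + b.2.2.1 T) := by ring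
        _ = 1 := by rw [a3, b3]; linarith
      · simp only [Prod.fst_add, Prod.snd_add, Prod.smul_fst, Prod.smul_snd, Pi.add_apply,
          Pi.smul_apply, smul_eq_mul]
        calc s * a.2.2.2.1 T j + u * b.2.2.2.1 T j + (s * a.2.2.2.2 T j + u * b.2.2.2.2 T j)
            = s * (a.2.2.2.1 T j + a.2.2.2.2 T j) + u * (b.2.2.2.1 T j + b.2.2.2.2 T j) := by
              ring
        _ = s * a.1 j + u * b.1 j := by rw [a4 j, b4 j]
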